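/- Let (m_i)_{i≥1} be a sequence of odd positive integers such that m_i → ∞ and (log₂ m_i)/ℓ_{m_i} → 0 as i → ∞. For each i, let Q_i be the fraction of pairs (a(X), b(X)) ∈ J_{m_i} × J_{m_i} such that dim C_{a,b} = m_i − 1. Then lim_{i→∞} Q_i = 1. -/

import Mathlib

open Polynomial

noncomputable section

/-- The polynomial `X^m - 1` over `Z/2`. -/
def fm (m : ℕ) : Polynomial (ZMod 2) := X ^ m - 1

/-- The polynomial `X^m - 1` over `Z/4`. -/
def fm4 (m : ℕ) : Polynomial (ZMod 4) := X ^ m - 1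

/-- `R_m = (Z/2)[X]/⟨X^m - 1⟩`. -/
abbrev R2 (m : ℕ) : Type := Polynomial (ZMod 2) ⧸ Ideal.span {fm m}

/-- `R'_m = (Z/4)[X]/⟨X^m - 1⟩`. -/
abbrev R4 (m : ℕ) : Type := Polynomial (ZMod 4) ⧸ Ideal.span {fm4 m}

def mk2 (m : ℕ) : Polynomial (ZMod 2) →+* R2 m := Ideal.Quotient.mk _

def mk4 (m : ℕ) : Polynomial (ZMod 4) →+* R4 m := Ideal.Quotient.mk _

/-- The canonical representative (of degree `< m`) of an element of `R2 m`. -/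
def rep2 (m : ℕ) (r : R2 m) : Polynomial (ZMod 2) :=
  (Function.surjInv (Ideal.Quotient.mk_surjective (I := Ideal.span {fm m})) r) %ₘ fm m

/-- The canonical representative (of degree `< m`) of an element of `R4 m`. -/
def rep4 (m : ℕ) (r : R4 m) : Polynomial (ZMod 4) :=
  (Function.surjInv (Ideal.Quotient.mk_surjective (I := Ideal.span {fm4 m})) r) %ₘ fm4 m

/-- Coefficientwise doubling map `(Z/2)[X] → (Z/4)[X]`, `a ↦ 2a` on each coefficient. -/
def polyDbl (p : Polynomial (ZMod 2)) : Polynomial (ZMod 4) :=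
  ∑ i ∈ p.support, Polynomial.C (2 * ((p.coeff i).val : ZMod 4)) * X ^ i

/-- The additive embedding `R_m → R'_m`, `f ↦ 2f`. -/
def iota (m : ℕ) (r : R2 m) : R4 m := mk4 m (polyDbl (rep2 m r))

/-- Hamming weight of an element of `R_m` (of its coefficient vector). -/
def wt2 (m : ℕ) (r : R2 m) : ℕ := (rep2 m r).support.card

/-- Lee weight of an element of `Z/4`. -/
def lee (x : ZMod 4) : ℕ := min x.val (4 - x.val)

/-- Lee weight of an element of `R'_m` (of its coefficient vector). -/
def wtLee (m : ℕ) (r : R4 m) : ℕ := ∑ i ∈ (rep4 m r).support, lee ((rep4 m r).coeff i)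

/-- The augmentation ideal `J_m = ⟨X - 1⟩` of `R_m`. -/
def Jm (m : ℕ) : Ideal (R2 m) := Ideal.span {mk2 m (X - 1)}

/-- The `Z2Z4`-additive cyclic code `C_{a,b} = {(f·a, 2(f·b)) : f ∈ R_m}`. -/
def Cab (m : ℕ) (a b : R2 m) : Set (R2 m × R4 m) :=
  {w | ∃ f : R2 m, w = (f * a, iota m (f * b))}

/-- Dimension of `C_{a,b}` as a vector space over `Z/2`, i.e. `log₂ |C_{a,b}|`. -/
def dimCab (m : ℕ) (a b : R2 m) : ℕ := Nat.log 2 (Nat.card (Cab m a b))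

/-- `(X^m - 1)/(X - 1) = X^{m-1} + ⋯ + X + 1` over `Z/2`. -/
def geomPoly (m : ℕ) : Polynomial (ZMod 2) := ∑ i ∈ Finset.range m, X ^ i

/-- `ℓ_m`: minimal degree of the irreducible factors of `(X^m-1)/(X-1)` in `(Z/2)[X]`. -/
def ell (m : ℕ) : ℕ :=
  sInf {d | ∃ p : Polynomial (ZMod 2), Irreducible p ∧ p ∣ geomPoly m ∧ p.natDegree = d}

/-- The binary entropy function `H(x) = -x·log₂x - (1-x)·log₂(1-x)`. -/
def Hent (x : ℝ) : ℝ := -(x * Real.logb 2 x) - (1 - x) * Real.logb 2 (1 - x)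

-- ===== auxiliary development =====
variable {m : ℕ}

lemma fm_eq : fm m = X ^ m - C 1 := by simp [fm]

lemma fm_monic (hm : 0 < m) : (fm m).Monic := by
  rw [fm_eq]; exact monic_X_pow_sub_C _ hm.ne'

lemma degree_fm (hm : 0 < m) : (fm m).degree = m := by
  rw [fm_eq]; exact degree_X_pow_sub_C hm _

lemma fm_ne_zero (hm : 0 < m) : fm m ≠ 0 := (fm_monic hm).ne_zero

lemma mk2_eq_mk2_iff {p q : Polynomial (ZMod 2)} :
    mk2 m p = mk2 m q ↔ fm m ∣ p - q := by
  rw [mk2, Ideal.Quotient.mk_eq_mk_iff_sub_mem, Ideal.mem_span_singleton]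

lemma mk2_mod (p : Polynomial (ZMod 2)) (hm : 0 < m) :
    mk2 m (p %ₘ fm m) = mk2 m p := by
  rw [mk2_eq_mk2_iff]
  exact ⟨-(p /ₘ fm m), by linear_combination (modByMonic_add_div p (fm m))⟩

lemma mk2_rep2 (r : R2 m) (hm : 0 < m) : mk2 m (rep2 m r) = r := by
  rw [rep2, mk2_mod _ hm]
  exact Function.surjInv_eq _ r

lemma degree_rep2_lt (r : R2 m) (hm : 0 < m) : (rep2 m r).degree < m := by
  have := degree_modByMonic_lt (Function.surjInv (Ideal.Quotient.mk_surjective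
    (I := Ideal.span {fm m})) r) (fm_monic hm)
  rwa [degree_fm hm] at this

lemma rep2_mk2 {p : Polynomial (ZMod 2)} (hm : 0 < m) (hp : p.degree < m) :
    rep2 m (mk2 m p) = p := by
  have h := mk2_rep2 (mk2 m p) hm
  rw [mk2_eq_mk2_iff] at h
  by_contra hne
  have h1 : (fm m).degree ≤ (rep2 m (mk2 m p) - p).degree :=
    degree_le_of_dvd h (sub_ne_zero.mpr hne)
  have h2 : (rep2 m (mk2 m p) - p).degree < (m : WithBot ℕ) :=
    lt_of_le_of_lt (degree_sub_le _ _) (max_lt (degree_rep2_lt _ hm) hp)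
  rw [degree_fm hm] at h1
  exact absurd (lt_of_le_of_lt h1 h2) (lt_irrefl _)

/-- injectivity of mk2 on low degree polys -/
lemma mk2_inj {p q : Polynomial (ZMod 2)} (hm : 0 < m) (hp : p.degree < m)
    (hq : q.degree < m) (h : mk2 m p = mk2 m q) : p = q := by
  rw [← rep2_mk2 hm hp, ← rep2_mk2 hm hq, h]

/-- The canonical equiv between `R2 m` and polynomials of degree < m. -/
def r2Equiv (hm : 0 < m) : R2 m ≃ ↥(degreeLT (ZMod 2) m) where
  toFun r := ⟨rep2 m r, by rw [mem_degreeLT]; exact degree_rep2_lt r hm⟩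
  invFun p := mk2 m p.1
  left_inv r := mk2_rep2 r hm
  right_inv p := Subtype.ext (rep2_mk2 hm (mem_degreeLT.mp p.2))

lemma card_degreeLT (n : ℕ) : Nat.card ↥(degreeLT (ZMod 2) n) = 2 ^ n := by
  rw [Nat.card_congr (degreeLTEquiv (ZMod 2) n).toEquiv]
  simp [Nat.card_pi, Nat.card_zmod]

lemma card_R2 (hm : 0 < m) : Nat.card (R2 m) = 2 ^ m := by
  rw [Nat.card_congr (r2Equiv hm), card_degreeLT]


instance : Nontrivial (ZMod 4) := ⟨0, 1, by decide⟩
lemma fm4_eq : fm4 m = X ^ m - C 1 := by simp [fm4]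
lemma fm4_monic (hm : 0 < m) : (fm4 m).Monic := by
  rw [fm4_eq]; exact monic_X_pow_sub_C _ hm.ne'
lemma degree_fm4 (hm : 0 < m) : (fm4 m).degree = m := by
  rw [fm4_eq]; exact degree_X_pow_sub_C hm _

lemma coeff_polyDbl (p : Polynomial (ZMod 2)) (n : ℕ) :
    (polyDbl p).coeff n = 2 * ((p.coeff n).val : ZMod 4) := by
  rw [polyDbl, finset_sum_coeff]
  by_cases hn : n ∈ p.support
  · rw [Finset.sum_eq_single n]
    · simp [mul_assoc, coeff_C_mul, coeff_X_pow]
    · intro b _ hb; simp [mul_assoc, coeff_C_mul, coeff_X_pow, Ne.symm hb]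
    · intro h; exact absurd hn h
  · rw [Finset.sum_eq_zero]
    · have : p.coeff n = 0 := notMem_support_iff.mp hn
      simp [this]
    · intro b hb
      have hbn : b ≠ n := by rintro rfl; exact hn hb
      simp [mul_assoc, coeff_C_mul, coeff_X_pow, Ne.symm hbn]

lemma polyDbl_inj : Function.Injective polyDbl := by
  intro p q h
  ext n
  have := congrArg (fun r => Polynomial.coeff r n) h
  simp only [coeff_polyDbl] at this
  have key : ∀ x y : ZMod 2, 2 * ((x.val : ZMod 4)) = 2 * ((y.val : ZMod 4)) → x = y := by
    decide
  exact key _ _ this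

lemma degree_polyDbl_le (p : Polynomial (ZMod 2)) : (polyDbl p).degree ≤ p.degree := by
  apply degree_le_iff_coeff_zero _ _ |>.mpr
  intro n hn
  rw [coeff_polyDbl, coeff_eq_zero_of_degree_lt hn]
  simp

lemma iota_inj (hm : 0 < m) : Function.Injective (iota m) := by
  intro r s h
  rw [iota, iota] at h
  have hsub : fm4 m ∣ polyDbl (rep2 m r) - polyDbl (rep2 m s) := by
    rwa [mk4, Ideal.Quotient.mk_eq_mk_iff_sub_mem, Ideal.mem_span_singleton] at h
  have hdeg : (polyDbl (rep2 m r) - polyDbl (rep2 m s)).degree < m := by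
    apply lt_of_le_of_lt (degree_sub_le _ _)
    exact max_lt (lt_of_le_of_lt (degree_polyDbl_le _) (degree_rep2_lt r hm))
      (lt_of_le_of_lt (degree_polyDbl_le _) (degree_rep2_lt s hm))
  have heq : polyDbl (rep2 m r) = polyDbl (rep2 m s) := by
    by_contra hne
    obtain ⟨t, ht⟩ := hsub
    have htne : t ≠ 0 := by rintro rfl; simp at ht; exact hne (sub_eq_zero.mp ht)
    have : (m : WithBot ℕ) ≤ (polyDbl (rep2 m r) - polyDbl (rep2 m s)).degree := by
      rw [ht, mul_comm, (fm4_monic hm).degree_mul, degree_fm4 hm]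
      exact le_add_of_nonneg_left (zero_le_degree_iff.mpr htne)
    exact absurd (lt_of_le_of_lt this hdeg) (lt_irrefl _)
  have := polyDbl_inj heq
  rw [← mk2_rep2 r hm, ← mk2_rep2 s hm, this]


lemma natDegree_fm (hm : 0 < m) : (fm m).natDegree = m :=
  natDegree_eq_of_degree_eq_some (degree_fm hm)

lemma mk2_eq_zero_iff {p : Polynomial (ZMod 2)} : mk2 m p = 0 ↔ fm m ∣ p := by
  rw [mk2, Ideal.Quotient.eq_zero_iff_mem, Ideal.mem_span_singleton]

section Gcd

variable (A B : Polynomial (ZMod 2))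

/-- the normalized gcd of `A`, `B`, `X^m-1`. -/
def gcd3 (m : ℕ) (A B : Polynomial (ZMod 2)) : Polynomial (ZMod 2) :=
  gcd (gcd A B) (fm m)

lemma gcd3_dvd_fm : gcd3 m A B ∣ fm m := gcd_dvd_right _ _
lemma gcd3_dvd_A : gcd3 m A B ∣ A := (gcd_dvd_left _ _).trans (gcd_dvd_left _ _)
lemma gcd3_dvd_B : gcd3 m A B ∣ B := (gcd_dvd_left _ _).trans (gcd_dvd_right _ _)

lemma gcd3_ne_zero (hm : 0 < m) : gcd3 m A B ≠ 0 := by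
  intro h
  exact fm_ne_zero hm (by simpa [h] using gcd3_dvd_fm A B (m := m))

lemma gcd3_monic (hm : 0 < m) : (gcd3 m A B).Monic := by
  have h : normalize (gcd3 m A B) = gcd3 m A B := normalize_gcd _ _
  rw [← h]
  exact monic_normalize (gcd3_ne_zero A B hm)

lemma gcd3_natDegree_le (hm : 0 < m) : (gcd3 m A B).natDegree ≤ m := by
  have := natDegree_le_of_dvd (gcd3_dvd_fm A B (m := m)) (fm_ne_zero hm)
  rwa [natDegree_fm hm] at this

/-- complementary factor -/
def qpoly (m : ℕ) (A B : Polynomial (ZMod 2)) : Polynomial (ZMod 2) :=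
  fm m /ₘ gcd3 m A B

/-- generic helper: a monic divisor divides exactly -/
lemma eq_mul_div_of_monic_dvd {q p : Polynomial (ZMod 2)} (hq : q.Monic) (h : q ∣ p) :
    p = q * (p /ₘ q) := by
  conv_lhs => rw [← modByMonic_add_div p q]
  rw [(modByMonic_eq_zero_iff_dvd hq).mpr h, zero_add]

lemma fm_eq_gcd3_mul_qpoly (hm : 0 < m) : fm m = gcd3 m A B * qpoly m A B :=
  eq_mul_div_of_monic_dvd (gcd3_monic A B hm) (gcd3_dvd_fm A B (m := m))

lemma qpoly_ne_zero (hm : 0 < m) : qpoly m A B ≠ 0 := by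
  intro h
  exact fm_ne_zero hm (by rw [fm_eq_gcd3_mul_qpoly A B hm, h, mul_zero])

lemma qpoly_monic (hm : 0 < m) : (qpoly m A B).Monic :=
  Monic.of_mul_monic_left (gcd3_monic A B hm) (by rw [← fm_eq_gcd3_mul_qpoly A B hm]; exact fm_monic hm)

lemma natDegree_qpoly (hm : 0 < m) :
    (qpoly m A B).natDegree = m - (gcd3 m A B).natDegree := by
  have h := congrArg natDegree (fm_eq_gcd3_mul_qpoly A B hm)
  rw [natDegree_fm hm, natDegree_mul (gcd3_ne_zero A B hm) (qpoly_ne_zero A B hm)] at h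
  omega

lemma natDegree_qpoly_add (hm : 0 < m) :
    (qpoly m A B).natDegree + (gcd3 m A B).natDegree = m := by
  have := natDegree_qpoly A B hm
  have := gcd3_natDegree_le A B hm
  omega

/-- key divisibility characterization of the kernel -/
lemma ker_iff (hm : 0 < m) (F : Polynomial (ZMod 2)) :
    (fm m ∣ F * A ∧ fm m ∣ F * B) ↔ qpoly m A B ∣ F := by
  constructor
  · rintro ⟨h1, h2⟩
    have hg : fm m ∣ F * gcd A B := by
      have := dvd_gcd h1 h2
      rwa [gcd_mul_left, (associated_normalize F).symm.mul_right (gcd A B) |>.dvd_iff_dvd_right] at this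
    have hd : fm m ∣ F * gcd3 m A B := by
      have h3 : fm m ∣ F * fm m := dvd_mul_left (fm m) F
      have h4 := dvd_gcd hg h3
      rw [gcd_mul_left] at h4
      rw [show F * gcd3 m A B = F * gcd (gcd A B) (fm m) from rfl]
      rwa [(associated_normalize F).symm.mul_right (gcd (gcd A B) (fm m)) |>.dvd_iff_dvd_right] at h4
    rw [fm_eq_gcd3_mul_qpoly A B hm, mul_comm F] at hd
    exact (mul_dvd_mul_iff_left (gcd3_ne_zero A B hm)).mp hd
  · rintro ⟨c, rfl⟩
    constructor
    · rw [fm_eq_gcd3_mul_qpoly A B hm]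
      have h := mul_dvd_mul (gcd3_dvd_A A B (m := m)) (dvd_mul_right (qpoly m A B) c)
      have he : A * (qpoly m A B * c) = qpoly m A B * c * A := by ring
      rwa [he] at h
    · rw [fm_eq_gcd3_mul_qpoly A B hm]
      have h := mul_dvd_mul (gcd3_dvd_B A B (m := m)) (dvd_mul_right (qpoly m A B) c)
      have he : B * (qpoly m A B * c) = qpoly m A B * c * B := by ring
      rwa [he] at h

/-- degree bound for the cofactor -/
lemma degree_div_lt' (hm : 0 < m) {F : Polynomial (ZMod 2)} (hdvd : qpoly m A B ∣ F)
    (hF : F.degree < (m : WithBot ℕ)) :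
    (F /ₘ qpoly m A B).degree < ((gcd3 m A B).natDegree : WithBot ℕ) := by
  set c := F /ₘ qpoly m A B with hc
  have hspec : F = qpoly m A B * c := eq_mul_div_of_monic_dvd (qpoly_monic A B hm) hdvd
  by_cases hczero : c = 0
  · rw [hczero, degree_zero]; exact WithBot.bot_lt_coe _
  · rw [hspec, degree_mul] at hF
    have hq : (qpoly m A B).degree = ((qpoly m A B).natDegree : WithBot ℕ) :=
      degree_eq_natDegree (qpoly_ne_zero A B hm)
    have hqd : ((qpoly m A B).natDegree : WithBot ℕ) + c.degree
        < ((qpoly m A B).natDegree : WithBot ℕ) + (gcd3 m A B).natDegree := by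
      rw [← hq]
      refine lt_of_lt_of_le hF ?_
      rw [hq, ← Nat.cast_add, natDegree_qpoly_add A B hm]
    exact lt_of_add_lt_add_left hqd

end Gcd

section Ker

variable (A B : Polynomial (ZMod 2))

/-- the multiplication homomorphism whose range is (the binary model of) the code -/
def psi (m : ℕ) (A B : Polynomial (ZMod 2)) : R2 m →+ R2 m × R2 m :=
  (AddMonoidHom.mulRight (mk2 m A)).prod (AddMonoidHom.mulRight (mk2 m B))

lemma mem_psi_ker_iff (f : R2 m) :
    f ∈ (psi m A B).ker ↔ (f * mk2 m A = 0 ∧ f * mk2 m B = 0) := by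
  rw [AddMonoidHom.mem_ker, psi, AddMonoidHom.prod_apply, Prod.mk_eq_zero]
  rfl

lemma qpoly_dvd_rep2_of_mem_ker (hm : 0 < m) {f : R2 m} (hf : f ∈ (psi m A B).ker) :
    qpoly m A B ∣ rep2 m f := by
  refine (ker_iff A B hm (rep2 m f)).mp ?_
  have h := (mem_psi_ker_iff A B f).mp hf
  constructor
  · rw [← mk2_eq_zero_iff, map_mul, mk2_rep2 _ hm]; exact h.1
  · rw [← mk2_eq_zero_iff, map_mul, mk2_rep2 _ hm]; exact h.2

/-- the kernel is in bijection with polynomials of degree < deg (gcd3) -/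
def kerEquiv (hm : 0 < m) : ↥(degreeLT (ZMod 2) (gcd3 m A B).natDegree) ≃ (psi m A B).ker where
  toFun c := ⟨mk2 m (qpoly m A B * c), by
    rw [mem_psi_ker_iff]
    have h := (ker_iff A B hm (qpoly m A B * c.1)).mpr ⟨c.1, rfl⟩
    exact ⟨by rw [← map_mul, mk2_eq_zero_iff]; exact h.1,
           by rw [← map_mul, mk2_eq_zero_iff]; exact h.2⟩⟩
  invFun f := ⟨rep2 m f.1 /ₘ qpoly m A B, by
    rw [mem_degreeLT]
    exact degree_div_lt' A B hm (qpoly_dvd_rep2_of_mem_ker A B hm f.2)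
      (degree_rep2_lt f.1 hm)⟩
  left_inv c := by
    apply Subtype.ext
    set f : R2 m := mk2 m (qpoly m A B * c.1) with hf
    have hmem : f ∈ (psi m A B).ker := by
      rw [mem_psi_ker_iff]
      have h := (ker_iff A B hm (qpoly m A B * c.1)).mpr ⟨c.1, rfl⟩
      exact ⟨by rw [hf, ← map_mul, mk2_eq_zero_iff]; exact h.1,
             by rw [hf, ← map_mul, mk2_eq_zero_iff]; exact h.2⟩
    set c' := rep2 m f /ₘ qpoly m A B with hc'
    have hdvd := qpoly_dvd_rep2_of_mem_ker A B hm hmem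
    have hspec : rep2 m f = qpoly m A B * c' :=
      eq_mul_div_of_monic_dvd (qpoly_monic A B hm) hdvd
    have h1 : mk2 m (qpoly m A B * c.1) = mk2 m (qpoly m A B * c') := by
      rw [← hspec, hf, mk2_rep2 _ hm]
    rw [mk2_eq_mk2_iff] at h1
    have h2 : qpoly m A B * gcd3 m A B ∣ qpoly m A B * (c.1 - c') := by
      rw [mul_comm (qpoly m A B) (gcd3 m A B), ← fm_eq_gcd3_mul_qpoly A B hm]
      rwa [mul_sub]
    have h3 : gcd3 m A B ∣ c.1 - c' :=
      (mul_dvd_mul_iff_left (qpoly_ne_zero A B hm)).mp h2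
    have h4 : c.1 - c' = 0 := by
      by_contra hne
      have hdeg := degree_le_of_dvd h3 hne
      have hlt : (c.1 - c').degree < ((gcd3 m A B).natDegree : WithBot ℕ) :=
        lt_of_le_of_lt (degree_sub_le _ _) (max_lt (mem_degreeLT.mp c.2)
          (degree_div_lt' A B hm hdvd (degree_rep2_lt f hm)))
      rw [degree_eq_natDegree (gcd3_ne_zero A B hm)] at hdeg
      exact absurd (lt_of_le_of_lt hdeg hlt) (lt_irrefl _)
    exact (sub_eq_zero.mp h4).symm
  right_inv f := by
    apply Subtype.ext
    have hdvd := qpoly_dvd_rep2_of_mem_ker A B hm f.2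
    show mk2 m (qpoly m A B * (rep2 m f.1 /ₘ qpoly m A B)) = f.1
    rw [← eq_mul_div_of_monic_dvd (qpoly_monic A B hm) hdvd, mk2_rep2 _ hm]

lemma card_psi_ker (hm : 0 < m) :
    Nat.card (psi m A B).ker = 2 ^ (gcd3 m A B).natDegree := by
  rw [← Nat.card_congr (kerEquiv A B hm), card_degreeLT]

lemma card_psi_range (hm : 0 < m) :
    Nat.card (psi m A B).range = 2 ^ (m - (gcd3 m A B).natDegree) := by
  have h := AddSubgroup.card_eq_card_quotient_mul_card_addSubgroup (psi m A B).ker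
  rw [card_R2 hm, Nat.card_congr (QuotientAddGroup.quotientKerEquivRange (psi m A B)).toEquiv,
    card_psi_ker A B hm] at h
  have hle := gcd3_natDegree_le A B hm
  have h2 : (2:ℕ) ^ m = 2 ^ (m - (gcd3 m A B).natDegree) * 2 ^ (gcd3 m A B).natDegree := by
    rw [← pow_add]; congr 1; omega
  rw [h2] at h
  exact (Nat.eq_of_mul_eq_mul_right (pow_pos (by norm_num) _) h.symm)

lemma cab_eq_image :
    Cab m (mk2 m A) (mk2 m B)
      = (Prod.map id (iota m)) '' ((psi m A B).range : Set (R2 m × R2 m)) := by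
  ext w
  constructor
  · rintro ⟨f, rfl⟩
    exact ⟨(f * mk2 m A, f * mk2 m B), ⟨f, rfl⟩, rfl⟩
  · rintro ⟨z, ⟨f, rfl⟩, rfl⟩
    exact ⟨f, rfl⟩

lemma card_cab (hm : 0 < m) :
    Nat.card (Cab m (mk2 m A) (mk2 m B)) = 2 ^ (m - (gcd3 m A B).natDegree) := by
  rw [cab_eq_image, Nat.card_image_of_injective
    (Function.Injective.prodMap Function.injective_id (iota_inj hm)),
    ← card_psi_range A B hm]
  rfl

lemma dimCab_eq (hm : 0 < m) :
    dimCab m (mk2 m A) (mk2 m B) = m - (gcd3 m A B).natDegree := by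
  rw [dimCab, card_cab A B hm, Nat.log_pow (by norm_num)]

end Ker


instance : Subsingleton ((ZMod 2)[X])ˣ := by
  constructor
  intro u v
  apply Units.ext
  have hu := Polynomial.isUnit_iff.mp u.isUnit
  have hv := Polynomial.isUnit_iff.mp v.isUnit
  obtain ⟨r, hr, hru⟩ := hu
  obtain ⟨s, hs, hsv⟩ := hv
  have h1 : ∀ t : ZMod 2, IsUnit t → t = 1 := by decide
  rw [← hru, ← hsv, h1 r hr, h1 s hs]

/-- X - 1 facts over ZMod 2 -/
lemma Xm1_eq : (X - 1 : (ZMod 2)[X]) = X - C 1 := by simp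

lemma Xm1_monic : (X - 1 : (ZMod 2)[X]).Monic := by
  rw [Xm1_eq]; exact monic_X_sub_C 1

lemma Xm1_ne_zero : (X - 1 : (ZMod 2)[X]) ≠ 0 := Xm1_monic.ne_zero

lemma natDegree_Xm1 : (X - 1 : (ZMod 2)[X]).natDegree = 1 := by
  rw [Xm1_eq]; exact natDegree_X_sub_C 1

lemma fm_eq_Xm1_mul_geom : fm m = (X - 1) * geomPoly m := by
  rw [fm, geomPoly, mul_comm]
  simpa using (geom_sum_mul (X : (ZMod 2)[X]) m).symm

lemma Xm1_dvd_fm : (X - 1 : (ZMod 2)[X]) ∣ fm m := ⟨geomPoly m, fm_eq_Xm1_mul_geom⟩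

lemma geomPoly_ne_zero (hm : 0 < m) : geomPoly m ≠ 0 := by
  intro h
  exact fm_ne_zero hm (by rw [fm_eq_Xm1_mul_geom, h, mul_zero])

lemma geomPoly_monic (hm : 0 < m) : (geomPoly m).Monic :=
  Monic.of_mul_monic_left Xm1_monic (by rw [← fm_eq_Xm1_mul_geom]; exact fm_monic hm)

lemma natDegree_geomPoly (hm : 0 < m) : (geomPoly m).natDegree = m - 1 := by
  have h := congrArg natDegree (fm_eq_Xm1_mul_geom (m := m))
  rw [natDegree_fm hm, natDegree_mul Xm1_ne_zero (geomPoly_ne_zero hm), natDegree_Xm1] at h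
  omega

lemma degree_geomPoly (hm : 0 < m) : (geomPoly m).degree = ((m - 1 : ℕ) : WithBot ℕ) := by
  rw [degree_eq_natDegree (geomPoly_ne_zero hm), natDegree_geomPoly hm]

/-- generic degree bound for exact division -/
lemma degree_divByMonic_lt_bound {q F : (ZMod 2)[X]} (hq : q.Monic) (hdvd : q ∣ F)
    {b n : ℕ} (hsum : q.natDegree + b = n) (hF : F.degree < (n : WithBot ℕ)) :
    (F /ₘ q).degree < (b : WithBot ℕ) := by
  set c := F /ₘ q with hc
  have hspec : F = q * c := eq_mul_div_of_monic_dvd hq hdvd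
  by_cases hczero : c = 0
  · rw [hczero, degree_zero]; exact WithBot.bot_lt_coe _
  · rw [hspec, degree_mul] at hF
    have hqd : q.degree = (q.natDegree : WithBot ℕ) := degree_eq_natDegree hq.ne_zero
    have h2 : (q.natDegree : WithBot ℕ) + c.degree
        < (q.natDegree : WithBot ℕ) + (b : WithBot ℕ) := by
      rw [← hqd]
      refine lt_of_lt_of_le hF ?_
      rw [hqd, ← Nat.cast_add, hsum]
    exact lt_of_add_lt_add_left h2

/-- the subtype of multiples of a monic `q` inside `degreeLT n` -/
def dvdEquiv (q : (ZMod 2)[X]) (hq : q.Monic) {b n : ℕ} (hsum : q.natDegree + b = n) :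
    {x : ↥(degreeLT (ZMod 2) n) // q ∣ x.1} ≃ ↥(degreeLT (ZMod 2) b) where
  toFun x := ⟨x.1.1 /ₘ q, by
    rw [mem_degreeLT]
    exact degree_divByMonic_lt_bound hq x.2 hsum (mem_degreeLT.mp x.1.2)⟩
  invFun c := ⟨⟨q * c.1, by
    rw [mem_degreeLT]
    by_cases hcz : c.1 = 0
    · rw [hcz, mul_zero, degree_zero]; exact WithBot.bot_lt_coe _
    · rw [degree_mul, degree_eq_natDegree hq.ne_zero]
      calc (q.natDegree : WithBot ℕ) + c.1.degree
          < (q.natDegree : WithBot ℕ) + (b : WithBot ℕ) := by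
            exact_mod_cast WithBot.add_lt_add_left (by exact WithBot.coe_ne_bot)
              (mem_degreeLT.mp c.2)
        _ = ((n : ℕ) : WithBot ℕ) := by rw [← Nat.cast_add, hsum]⟩,
    dvd_mul_right _ _⟩
  left_inv x := by
    apply Subtype.ext; apply Subtype.ext
    exact (eq_mul_div_of_monic_dvd hq x.2).symm
  right_inv c := by
    apply Subtype.ext
    exact mul_divByMonic_cancel_left c.1 hq

lemma card_dvd_subtype (q : (ZMod 2)[X]) (hq : q.Monic) {b n : ℕ}
    (hsum : q.natDegree + b = n) :
    Nat.card {x : ↥(degreeLT (ZMod 2) n) // q ∣ x.1} = 2 ^ b := by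
  rw [Nat.card_congr (dvdEquiv q hq hsum), card_degreeLT]

/-- the parametrization of Jm by polynomials of degree < m - 1 -/
def jmap (m : ℕ) (A : ↥(degreeLT (ZMod 2) (m - 1))) : R2 m := mk2 m ((X - 1) * A.1)

lemma jmap_mem (A : ↥(degreeLT (ZMod 2) (m - 1))) : jmap m A ∈ Jm m := by
  rw [Jm, Ideal.mem_span_singleton']
  exact ⟨mk2 m A.1, by rw [jmap, ← map_mul, mul_comm]⟩

lemma jmap_inj (hm : 0 < m) : Function.Injective (jmap m) := by
  intro A B h
  rw [jmap, jmap, mk2_eq_mk2_iff] at h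
  rw [← mul_sub, fm_eq_Xm1_mul_geom] at h
  have h2 : geomPoly m ∣ A.1 - B.1 := (mul_dvd_mul_iff_left Xm1_ne_zero).mp h
  apply Subtype.ext
  by_contra hne
  have hd := degree_le_of_dvd h2 (sub_ne_zero.mpr (fun hh => hne hh))
  have hlt : (A.1 - B.1).degree < ((m - 1 : ℕ) : WithBot ℕ) :=
    lt_of_le_of_lt (degree_sub_le _ _) (max_lt (mem_degreeLT.mp A.2) (mem_degreeLT.mp B.2))
  rw [degree_geomPoly hm] at hd
  exact absurd (lt_of_le_of_lt hd hlt) (lt_irrefl _)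

lemma jmap_surj (hm : 0 < m) {a : R2 m} (ha : a ∈ Jm m) :
    ∃ A : ↥(degreeLT (ZMod 2) (m - 1)), jmap m A = a := by
  rw [Jm, Ideal.mem_span_singleton'] at ha
  obtain ⟨r, hr⟩ := ha
  refine ⟨⟨(rep2 m r) %ₘ geomPoly m, ?_⟩, ?_⟩
  · rw [mem_degreeLT, ← degree_geomPoly hm]
    exact degree_modByMonic_lt _ (geomPoly_monic hm)
  · rw [jmap]
    have h1 : mk2 m ((X - 1) * ((rep2 m r) %ₘ geomPoly m)) = mk2 m ((X - 1) * rep2 m r) := by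
      rw [mk2_eq_mk2_iff, ← mul_sub]
      have h2 : geomPoly m ∣ (rep2 m r) %ₘ geomPoly m - rep2 m r := by
        refine ⟨-(rep2 m r /ₘ geomPoly m), ?_⟩
        linear_combination (modByMonic_add_div (rep2 m r) (geomPoly m))
      rw [fm_eq_Xm1_mul_geom]
      exact mul_dvd_mul_left _ h2
    rw [h1, map_mul, mul_comm, ← hr]
    congr 1
    · exact mk2_rep2 r hm


/-- Γ, the parameter space -/
abbrev Gam (m : ℕ) := ↥(degreeLT (ZMod 2) (m - 1)) × ↥(degreeLT (ZMod 2) (m - 1))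

instance gamFintype : Fintype (Gam m) := by
  have : Fintype ↥(degreeLT (ZMod 2) (m - 1)) :=
    Fintype.ofEquiv _ (degreeLTEquiv (ZMod 2) (m - 1)).toEquiv.symm
  infer_instance

/-- the condition deg gcd3 = 1 on Γ -/
def CondD (m : ℕ) (q : Gam m) : Prop :=
  (gcd3 m ((X - 1) * q.1.1) ((X - 1) * q.2.1)).natDegree = 1

lemma Xm1_dvd_gcd3 (q : Gam m) :
    (X - 1 : (ZMod 2)[X]) ∣ gcd3 m ((X - 1) * q.1.1) ((X - 1) * q.2.1) :=
  dvd_gcd (dvd_gcd (dvd_mul_right _ _) (dvd_mul_right _ _)) Xm1_dvd_fm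

lemma one_le_dd (hm : 0 < m) (q : Gam m) :
    1 ≤ (gcd3 m ((X - 1) * q.1.1) ((X - 1) * q.2.1)).natDegree := by
  have h := natDegree_le_of_dvd (Xm1_dvd_gcd3 q) (gcd3_ne_zero _ _ hm)
  rwa [natDegree_Xm1] at h

lemma dim_iff_cond (hm : 0 < m) (q : Gam m) :
    dimCab m (jmap m q.1) (jmap m q.2) = m - 1 ↔ CondD m q := by
  rw [jmap, jmap, dimCab_eq _ _ hm, CondD]
  have h1 := one_le_dd hm q
  have h2 := gcd3_natDegree_le ((X - 1) * q.1.1) ((X - 1) * q.2.1) hm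
  omega

/-- the parametrization of pairs -/
def pairEquiv (hm : 0 < m) :
    Gam m ≃ {p : R2 m × R2 m // p.1 ∈ Jm m ∧ p.2 ∈ Jm m} :=
  Equiv.ofBijective (fun q => ⟨(jmap m q.1, jmap m q.2), jmap_mem q.1, jmap_mem q.2⟩)
    ⟨fun q q' h => by
      have h1 := congrArg (fun x => x.1.1) h
      have h2 := congrArg (fun x => x.1.2) h
      exact Prod.ext (jmap_inj hm h1) (jmap_inj hm h2),
     fun x => by
      obtain ⟨A, hA⟩ := jmap_surj hm x.2.1
      obtain ⟨B, hB⟩ := jmap_surj hm x.2.2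
      exact ⟨(A, B), Subtype.ext (Prod.ext hA hB)⟩⟩

lemma card_den (hm : 0 < m) :
    Nat.card {p : R2 m × R2 m // p.1 ∈ Jm m ∧ p.2 ∈ Jm m} = 2 ^ (m - 1) * 2 ^ (m - 1) := by
  rw [← Nat.card_congr (pairEquiv hm), Nat.card_prod, card_degreeLT]

/-- the equivalence for the numerator -/
def numEquiv (hm : 0 < m) :
    {q : Gam m // CondD m q} ≃
      {p : R2 m × R2 m // p.1 ∈ Jm m ∧ p.2 ∈ Jm m ∧ dimCab m p.1 p.2 = m - 1} := by
  refine (Equiv.subtypeEquiv (pairEquiv hm) (fun q => ?_)).trans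
    ((Equiv.subtypeSubtypeEquivSubtypeInter
      (fun p : R2 m × R2 m => p.1 ∈ Jm m ∧ p.2 ∈ Jm m)
      (fun p => dimCab m p.1 p.2 = m - 1)).trans
      (Equiv.subtypeEquivRight (fun p => by tauto)))
  exact ((dim_iff_cond hm q).symm).trans Iff.rfl

lemma card_num (hm : 0 < m) :
    Nat.card {p : R2 m × R2 m // p.1 ∈ Jm m ∧ p.2 ∈ Jm m ∧ dimCab m p.1 p.2 = m - 1}
      = Nat.card {q : Gam m // CondD m q} :=
  (Nat.card_congr (numEquiv hm)).symm

-- ########## the bad-set bound ##########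

open UniqueFactorizationMonoid in
/-- the finset of prime factors of geomPoly -/
def Sfac (m : ℕ) : Finset (Polynomial (ZMod 2)) := (normalizedFactors (geomPoly m)).toFinset

open UniqueFactorizationMonoid in
lemma mem_Sfac_iff (hm : 0 < m) {p : Polynomial (ZMod 2)} :
    p ∈ Sfac m ↔ Prime p ∧ p ∣ geomPoly m := by
  rw [Sfac, Multiset.mem_toFinset, mem_normalizedFactors_iff (geomPoly_ne_zero hm)]

lemma Sfac_monic (hm : 0 < m) {p : Polynomial (ZMod 2)} (hp : p ∈ Sfac m) : p.Monic := by
  have h := UniqueFactorizationMonoid.normalize_normalized_factor p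
    (Multiset.mem_toFinset.mp hp)
  have hne : p ≠ 0 := ((mem_Sfac_iff hm).mp hp).1.ne_zero
  rw [← h]
  exact monic_normalize hne

lemma Sfac_deg_ge (hm : 0 < m) {p : Polynomial (ZMod 2)} (hp : p ∈ Sfac m) :
    ell m ≤ p.natDegree := by
  obtain ⟨hprime, hdvd⟩ := (mem_Sfac_iff hm).mp hp
  exact Nat.sInf_le ⟨p, hprime.irreducible, hdvd, rfl⟩

lemma Sfac_deg_le (hm : 0 < m) {p : Polynomial (ZMod 2)} (hp : p ∈ Sfac m) :
    p.natDegree ≤ m - 1 := by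
  obtain ⟨hprime, hdvd⟩ := (mem_Sfac_iff hm).mp hp
  have := natDegree_le_of_dvd hdvd (geomPoly_ne_zero hm)
  rwa [natDegree_geomPoly hm] at this

lemma Sfac_deg_pos (hm : 0 < m) {p : Polynomial (ZMod 2)} (hp : p ∈ Sfac m) :
    1 ≤ p.natDegree :=
  ((mem_Sfac_iff hm).mp hp).1.irreducible.natDegree_pos

lemma Sfac_card_le (hm : 0 < m) : (Sfac m).card ≤ m - 1 := by
  have hprod : (∏ p ∈ Sfac m, p) ∣ geomPoly m :=
    Finset.prod_primes_dvd _ (fun p hp => ((mem_Sfac_iff hm).mp hp).1)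
      (fun p hp => ((mem_Sfac_iff hm).mp hp).2)
  have hdeg : (∏ p ∈ Sfac m, p).natDegree ≤ m - 1 := by
    have := natDegree_le_of_dvd hprod (geomPoly_ne_zero hm)
    rwa [natDegree_geomPoly hm] at this
  rw [natDegree_prod _ _ (fun p hp => ((mem_Sfac_iff hm).mp hp).1.ne_zero)] at hdeg
  calc (Sfac m).card = ∑ _p ∈ Sfac m, 1 := by simp
    _ ≤ ∑ p ∈ Sfac m, p.natDegree := Finset.sum_le_sum (fun p hp => Sfac_deg_pos hm hp)
    _ ≤ m - 1 := hdeg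

/-- when the condition fails, a common prime factor exists -/
lemma exists_common_factor (hm : 0 < m) {q : Gam m} (hq : ¬ CondD m q) :
    ∃ p ∈ Sfac m, p ∣ q.1.1 ∧ p ∣ q.2.1 := by
  set D := gcd3 m ((X - 1) * q.1.1) ((X - 1) * q.2.1) with hD
  have h1 := one_le_dd hm q
  rw [← hD] at h1
  have hq' : D.natDegree ≠ 1 := fun h => hq h
  have h2 : 2 ≤ D.natDegree := by omega
  have hdvd : (X - 1 : (ZMod 2)[X]) ∣ D := Xm1_dvd_gcd3 q
  set E := D /ₘ (X - 1) with hE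
  have hspec : D = (X - 1) * E := eq_mul_div_of_monic_dvd Xm1_monic hdvd
  have hEne : E ≠ 0 := by
    intro h
    exact gcd3_ne_zero _ _ hm (by rw [← hD, hspec, h, mul_zero])
  have hdegE : 1 ≤ E.natDegree := by
    have hnd : D.natDegree = 1 + E.natDegree := by
      rw [hspec, natDegree_mul Xm1_ne_zero hEne, natDegree_Xm1]
    omega
  have hnotunit : ¬ IsUnit E := by
    intro h
    have h0 : E.natDegree = 0 := natDegree_eq_zero_of_isUnit h
    omega
  obtain ⟨i, hirr, hidvd⟩ := WfDvdMonoid.exists_irreducible_factor hnotunit hEne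
  have hiprime : Prime i := hirr.prime
  have hEg : E ∣ geomPoly m := by
    have hDfm : D ∣ fm m := by rw [hD]; exact gcd3_dvd_fm _ _
    rw [fm_eq_Xm1_mul_geom, hspec] at hDfm
    exact (mul_dvd_mul_iff_left Xm1_ne_zero).mp hDfm
  have hEA : E ∣ q.1.1 := by
    have hDA : D ∣ (X - 1) * q.1.1 := by rw [hD]; exact gcd3_dvd_A _ _
    rw [hspec] at hDA
    exact (mul_dvd_mul_iff_left Xm1_ne_zero).mp hDA
  have hEB : E ∣ q.2.1 := by
    have hDB : D ∣ (X - 1) * q.2.1 := by rw [hD]; exact gcd3_dvd_B _ _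
    rw [hspec] at hDB
    exact (mul_dvd_mul_iff_left Xm1_ne_zero).mp hDB
  exact ⟨i, (mem_Sfac_iff hm).mpr ⟨hiprime, hidvd.trans hEg⟩,
    hidvd.trans hEA, hidvd.trans hEB⟩

/-- per-factor count -/
lemma card_both_dvd (hm : 0 < m) {p : Polynomial (ZMod 2)} (hp : p ∈ Sfac m) :
    Nat.card {q : Gam m // p ∣ q.1.1 ∧ p ∣ q.2.1}
      = 2 ^ (m - 1 - p.natDegree) * 2 ^ (m - 1 - p.natDegree) := by
  rw [Nat.card_congr (Equiv.subtypeProdEquivProd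
    (p := fun x : ↥(degreeLT (ZMod 2) (m-1)) => p ∣ x.1)
    (q := fun x : ↥(degreeLT (ZMod 2) (m-1)) => p ∣ x.1)), Nat.card_prod]
  have hsum : p.natDegree + (m - 1 - p.natDegree) = m - 1 := by
    have := Sfac_deg_le hm hp
    omega
  rw [card_dvd_subtype p (Sfac_monic hm hp) hsum]

/-- the main counting bound -/
lemma main_count (hm : 0 < m) :
    Nat.card {q : Gam m // CondD m q} + Nat.card {q : Gam m // ¬ CondD m q}
        = 2 ^ (m - 1) * 2 ^ (m - 1)
    ∧ Nat.card {q : Gam m // ¬ CondD m q}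
        ≤ (m - 1) * (2 ^ (m - 1 - ell m) * 2 ^ (m - 1 - ell m)) := by
  classical
  constructor
  · rw [Nat.card_eq_fintype_card, Nat.card_eq_fintype_card,
      Fintype.card_subtype, Fintype.card_subtype,
      Finset.card_filter_add_card_filter_not]
    have : Fintype.card (Gam m) = 2 ^ (m - 1) * 2 ^ (m - 1) := by
      rw [← Nat.card_eq_fintype_card, Nat.card_prod, card_degreeLT]
    rw [Finset.card_univ, this]
  · rw [Nat.card_eq_fintype_card, Fintype.card_subtype]
    have hsub : Finset.univ.filter (fun q : Gam m => ¬ CondD m q)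
        ⊆ (Sfac m).biUnion (fun p => Finset.univ.filter
            (fun q : Gam m => p ∣ q.1.1 ∧ p ∣ q.2.1)) := by
      intro q hq
      rw [Finset.mem_filter] at hq
      obtain ⟨p, hpS, hpd⟩ := exists_common_factor hm hq.2
      rw [Finset.mem_biUnion]
      exact ⟨p, hpS, by rw [Finset.mem_filter]; exact ⟨Finset.mem_univ _, hpd⟩⟩
    calc (Finset.univ.filter (fun q : Gam m => ¬ CondD m q)).card
        ≤ ((Sfac m).biUnion (fun p => Finset.univ.filter
            (fun q : Gam m => p ∣ q.1.1 ∧ p ∣ q.2.1))).card := Finset.card_le_card hsub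
      _ ≤ ∑ p ∈ Sfac m, (Finset.univ.filter
            (fun q : Gam m => p ∣ q.1.1 ∧ p ∣ q.2.1)).card := Finset.card_biUnion_le
      _ ≤ ∑ _p ∈ Sfac m, (2 ^ (m - 1 - ell m) * 2 ^ (m - 1 - ell m)) := by
          refine Finset.sum_le_sum (fun p hp => ?_)
          have hcard := card_both_dvd hm hp
          rw [Nat.card_eq_fintype_card, Fintype.card_subtype] at hcard
          rw [hcard]
          have h1 : m - 1 - p.natDegree ≤ m - 1 - ell m :=
            Nat.sub_le_sub_left (Sfac_deg_ge hm hp) _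
          exact Nat.mul_le_mul (Nat.pow_le_pow_right (by norm_num) h1)
            (Nat.pow_le_pow_right (by norm_num) h1)
      _ ≤ (m - 1) * (2 ^ (m - 1 - ell m) * 2 ^ (m - 1 - ell m)) := by
          rw [Finset.sum_const, smul_eq_mul]
          exact Nat.mul_le_mul_right _ (Sfac_card_le hm)


lemma ell_pos (hm2 : 2 ≤ m) : 1 ≤ ell m := by
  have hm : 0 < m := by omega
  have hdeg : 0 < (geomPoly m).natDegree := by rw [natDegree_geomPoly hm]; omega
  have hnotunit : ¬ IsUnit (geomPoly m) := by
    intro h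
    have := natDegree_eq_zero_of_isUnit h
    omega
  obtain ⟨i, hirr, hdvd⟩ :=
    WfDvdMonoid.exists_irreducible_factor hnotunit (geomPoly_ne_zero hm)
  have hne : {d | ∃ p : Polynomial (ZMod 2),
      Irreducible p ∧ p ∣ geomPoly m ∧ p.natDegree = d}.Nonempty :=
    ⟨i.natDegree, i, hirr, hdvd, rfl⟩
  obtain ⟨p, hp, _, hdp⟩ := Nat.sInf_mem hne
  rw [ell, ← hdp]
  exact hp.natDegree_pos

lemma ell_le (hm : 0 < m) : ell m ≤ m - 1 := by
  rw [ell]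
  set S := {d | ∃ p : Polynomial (ZMod 2), Irreducible p ∧ p ∣ geomPoly m ∧ p.natDegree = d}
    with hS
  rcases Set.eq_empty_or_nonempty S with h | h
  · rw [h, Nat.sInf_empty]; omega
  · obtain ⟨p, hp, hdvd, hdp⟩ := Nat.sInf_mem h
    rw [← hdp]
    have := natDegree_le_of_dvd hdvd (geomPoly_ne_zero hm)
    rwa [natDegree_geomPoly hm] at this

/-- real-valued bound on the bad fraction -/
lemma frac_bounds (hm : 0 < m) :
    (1 : ℝ) - (m : ℝ) / (4 : ℝ) ^ (ell m) ≤
      (Nat.card {p : R2 m × R2 m // p.1 ∈ Jm m ∧ p.2 ∈ Jm m ∧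
          dimCab m p.1 p.2 = m - 1} : ℝ) /
      (Nat.card {p : R2 m × R2 m // p.1 ∈ Jm m ∧ p.2 ∈ Jm m} : ℝ)
    ∧ (Nat.card {p : R2 m × R2 m // p.1 ∈ Jm m ∧ p.2 ∈ Jm m ∧
          dimCab m p.1 p.2 = m - 1} : ℝ) /
      (Nat.card {p : R2 m × R2 m // p.1 ∈ Jm m ∧ p.2 ∈ Jm m} : ℝ) ≤ 1 := by
  obtain ⟨hsum, hbad⟩ := main_count hm
  set N : ℕ := Nat.card {q : Gam m // CondD m q}
  set B : ℕ := Nat.card {q : Gam m // ¬ CondD m q}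
  set T : ℕ := 2 ^ (m - 1) * 2 ^ (m - 1) with hT
  have hTpos : 0 < T := by positivity
  have hNle : N ≤ T := by omega
  -- key ℕ inequality : B * (2^ℓ * 2^ℓ) ≤ m * T
  have hkey : B * (2 ^ ell m * 2 ^ ell m) ≤ m * T := by
    calc B * (2 ^ ell m * 2 ^ ell m)
        ≤ ((m - 1) * (2 ^ (m - 1 - ell m) * 2 ^ (m - 1 - ell m))) * (2 ^ ell m * 2 ^ ell m) :=
          Nat.mul_le_mul_right _ hbad
      _ = (m - 1) * ((2 ^ (m - 1 - ell m) * 2 ^ ell m) * (2 ^ (m - 1 - ell m) * 2 ^ ell m)) := by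
          ring
      _ ≤ m * (2 ^ (m - 1) * 2 ^ (m - 1)) := by
          have h1 : 2 ^ (m - 1 - ell m) * 2 ^ ell m ≤ 2 ^ (m - 1) := by
            rw [← pow_add]
            have := ell_le hm
            exact Nat.pow_le_pow_right (by norm_num) (by omega)
          exact Nat.mul_le_mul (by omega) (Nat.mul_le_mul h1 h1)
  rw [card_num hm, card_den hm, ← hT]
  have hcast : (N : ℝ) / (T : ℝ) = 1 - (B : ℝ) / (T : ℝ) := by
    have hNB : (N : ℝ) = (T : ℝ) - (B : ℝ) := by
      have : N + B = T := hsum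
      push_cast [← this]
      ring
    rw [hNB]
    field_simp
  constructor
  · rw [hcast]
    have hBfrac : (B : ℝ) / (T : ℝ) ≤ (m : ℝ) / (4 : ℝ) ^ (ell m) := by
      rw [div_le_div_iff₀ (by exact_mod_cast hTpos) (by positivity)]
      have h4 : ((4 : ℝ) ^ ell m) = ((2 ^ ell m * 2 ^ ell m : ℕ) : ℝ) := by
        push_cast
        rw [← pow_add, ← two_mul, pow_mul]
        norm_num
      rw [h4]
      calc (B : ℝ) * ((2 ^ ell m * 2 ^ ell m : ℕ) : ℝ)
          = ((B * (2 ^ ell m * 2 ^ ell m) : ℕ) : ℝ) := by push_cast; ring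
        _ ≤ ((m * T : ℕ) : ℝ) := by exact_mod_cast hkey
        _ = (m : ℝ) * (T : ℝ) := by push_cast; ring
    linarith
  · rw [hcast]
    have : 0 ≤ (B : ℝ) / (T : ℝ) := by positivity
    linarith

open Filter Topology in
/-- the fraction `m / 4^(ell m)` tends to zero -/
lemma small_tendsto (ms : ℕ → ℕ)
    (htop : Tendsto (fun i => (ms i : ℝ)) atTop atTop)
    (hlog : Tendsto (fun i => Real.logb 2 (ms i) / (ell (ms i) : ℝ)) atTop (nhds 0)) :
    Tendsto (fun i => (ms i : ℝ) / (4 : ℝ) ^ (ell (ms i))) atTop (nhds 0) := by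
  set a : ℕ → ℝ := fun i => Real.logb 2 (ms i) with ha
  set L : ℕ → ℕ := fun i => ell (ms i) with hL
  have h2 : ∀ᶠ i in atTop, 2 ≤ ms i := by
    have := htop.eventually_ge_atTop (2 : ℝ)
    filter_upwards [this] with i hi
    exact_mod_cast hi
  have hLpos : ∀ᶠ i in atTop, 1 ≤ L i := by
    filter_upwards [h2] with i hi
    exact ell_pos hi
  have hatop : Tendsto a atTop atTop := by
    rw [ha]
    exact (Real.tendsto_logb_atTop (by norm_num : (1:ℝ) < 2)).comp htop
  have hhalf : ∀ᶠ i in atTop, a i / (L i : ℝ) < 1/2 := by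
    have := hlog.eventually (gt_mem_nhds (by norm_num : (0:ℝ) < 1/2))
    exact this
  -- eventually a i ≤ L i / 2
  have hebound : ∀ᶠ i in atTop, a i ≤ (L i : ℝ) / 2 := by
    filter_upwards [hhalf, hLpos] with i h1 h2
    have hLpos' : (0 : ℝ) < (L i : ℝ) := by exact_mod_cast h2
    rw [div_lt_iff₀ hLpos'] at h1
    linarith
  -- L tends to infinity
  have hLtop : Tendsto (fun i => (L i : ℝ)) atTop atTop := by
    apply tendsto_atTop_mono' atTop (by
      filter_upwards [hebound] with i hi
      linarith : ∀ᶠ i in atTop, 2 * a i - 0 ≤ (L i : ℝ))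
    exact tendsto_atTop_add_const_right _ _ (hatop.const_mul_atTop (by norm_num))
  have hLtopN : Tendsto L atTop atTop := by
    rwa [tendsto_natCast_atTop_iff] at hLtop
  -- the geometric bound
  set r : ℝ := (2 : ℝ) ^ (-(3/2) : ℝ) with hr
  have hr0 : 0 < r := Real.rpow_pos_of_pos (by norm_num) _
  have hr1 : r < 1 := by
    rw [hr]
    apply Real.rpow_lt_one_of_one_lt_of_neg (by norm_num)
    norm_num
  have hgeo : Tendsto (fun i => r ^ (L i)) atTop (nhds 0) :=
    (tendsto_pow_atTop_nhds_zero_of_lt_one hr0.le hr1).comp hLtopN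
  -- squeeze
  apply squeeze_zero' (by
      filter_upwards [htop.eventually_ge_atTop (0:ℝ)] with i hi
      positivity)
    (by
      filter_upwards [hebound, h2] with i h1 h2
      -- m / 4^L ≤ 2^(L/2) / 2^(2L) = r ^ L
      have hmpos : (0 : ℝ) < (ms i : ℝ) := by
        have : (2:ℝ) ≤ (ms i : ℝ) := by exact_mod_cast h2
        linarith
      have hm_eq : (ms i : ℝ) = (2 : ℝ) ^ (a i) := by
        rw [ha]
        exact (Real.rpow_logb (by norm_num) (by norm_num) hmpos).symm
      have h4L : ((4 : ℝ) ^ (L i)) = (2 : ℝ) ^ ((2 * L i : ℕ) : ℝ) := by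
        rw [Real.rpow_natCast, pow_mul]
        norm_num
      rw [hm_eq, h4L, div_le_iff₀ (by positivity)]
      have hrL : r ^ (L i) = (2:ℝ) ^ ((-(3/2) : ℝ) * (L i : ℝ)) := by
        rw [hr, ← Real.rpow_natCast ((2:ℝ) ^ (-(3/2):ℝ)) (L i), ← Real.rpow_mul (by norm_num)]
      rw [hrL, ← Real.rpow_add (by norm_num)]
      apply Real.rpow_le_rpow_left_iff (by norm_num : (1:ℝ) < 2) |>.mpr
      push_cast
      linarith)
    hgeo


open Filter Topology in
/-- If `m_i` are odd, `m_i → ∞` and `log₂(m_i)/ℓ_{m_i} → 0`, then the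
fraction of pairs `(a,b) ∈ J_{m_i} × J_{m_i}` with `dim C_{a,b} = m_i - 1` tends to `1`. -/
theorem statement11 (ms : ℕ → ℕ) (hodd : ∀ i, Odd (ms i)) (hpos : ∀ i, 0 < ms i)
    (htop : Tendsto (fun i => (ms i : ℝ)) atTop atTop)
    (hlog : Tendsto (fun i => Real.logb 2 (ms i) / (ell (ms i) : ℝ)) atTop (nhds 0)) :
    Tendsto (fun i =>
      (Nat.card {p : R2 (ms i) × R2 (ms i) // p.1 ∈ Jm (ms i) ∧ p.2 ∈ Jm (ms i) ∧
          dimCab (ms i) p.1 p.2 = ms i - 1} : ℝ) /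
      (Nat.card {p : R2 (ms i) × R2 (ms i) // p.1 ∈ Jm (ms i) ∧ p.2 ∈ Jm (ms i)} : ℝ))
      atTop (nhds 1) := by
  have hsmall := small_tendsto ms htop hlog
  have hlow : Tendsto (fun i => 1 - (ms i : ℝ) / (4 : ℝ) ^ (ell (ms i))) atTop (nhds 1) := by
    have := (tendsto_const_nhds (x := (1:ℝ)) (f := atTop)).sub hsmall
    simpa using this
  refine tendsto_of_tendsto_of_tendsto_of_le_of_le' hlow tendsto_const_nhds ?_ ?_
  · filter_upwards with i
    exact (frac_bounds (hpos i)).1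
  · filter_upwards with i
    exact (frac_bounds (hpos i)).2

end
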